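/- Let G be a graph, W ⊆ V(G) with |W| ≥ ν, and Z a set of κ vertices dominating W (W ⊆ N[Z]). Then the vertices of Z can be ordered z₁,…,z_κ so that for some m ≤ κ the sequence (z₁,…,z_m) is a pseudo-cover of W with parameters κ, λ = 1/κ, μ = 2κ², ν = 2κ³. -/

import Mathlib

variable {V : Type*} [Fintype V] [DecidableEq V]

/-- The closed neighborhood of `v` as a finset. -/
def closedNbr (G : SimpleGraph V) [DecidableRel G.Adj] (v : V) : Finset V :=
  insert v (G.neighborFinset v)

/-- The elements of `W` not covered by the closed neighborhoods of the
vertices in the list `l`. -/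
def uncovered (G : SimpleGraph V) [DecidableRel G.Adj] (W : Finset V)
    (l : List V) : Finset V :=
  W.filter fun w => ∀ v ∈ l, w ∉ closedNbr G v

/-- A pseudo-cover of `W` with parameters `(κ, λ = 1/κ, μ, ν)`: a sequence
`(v₁, …, v_m)` with `m ≤ κ` such that each `vᵢ` is `1/κ`-strong for the part of
`W` not yet covered and covers at least `μ` of its elements, and at most `ν`
elements of `W` remain uncovered at the end. -/
def IsPseudoCover (G : SimpleGraph V) [DecidableRel G.Adj]
    (κ μ ν : ℕ) (W : Finset V) (l : List V) : Prop :=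
  l.length ≤ κ ∧
  (∀ i : Fin l.length,
      (uncovered G W (l.take i.1)).card ≤
        κ * (closedNbr G (l.get i) ∩ uncovered G W (l.take i.1)).card ∧
      μ ≤ (closedNbr G (l.get i) ∩ uncovered G W (l.take i.1)).card) ∧
  (uncovered G W l).card ≤ ν

lemma caseA (G : SimpleGraph V) [DecidableRel G.Adj] (κ : ℕ)
    (W Z S : Finset V) (hZ : Z.card = κ) (hS : S ⊆ Z)
    (l : List V) (hnd : l.Nodup) (hlt : l.toFinset = Z \ S)
    (hstep : ∀ i : Fin l.length,
      (uncovered G W (l.take i.1)).card ≤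
        κ * (closedNbr G (l.get i) ∩ uncovered G W (l.take i.1)).card ∧
      2 * κ ^ 2 ≤ (closedNbr G (l.get i) ∩ uncovered G W (l.take i.1)).card)
    (hsmall : (uncovered G W l).card ≤ 2 * κ ^ 3) :
    ∃ L : List V, L.Nodup ∧ L.toFinset = Z ∧
      ∃ m ≤ κ, IsPseudoCover G κ (2 * κ ^ 2) (2 * κ ^ 3) W (L.take m) := by
  have hlen : l.length ≤ κ := by
    have := List.toFinset_card_of_nodup hnd
    rw [hlt] at this
    have h2 : (Z \ S).card ≤ Z.card := Finset.card_le_card (Finset.sdiff_subset)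
    omega
  refine ⟨l ++ S.toList, ?_, ?_, l.length, hlen, ?_⟩
  · rw [List.nodup_append]
    refine ⟨hnd, S.nodup_toList, fun a ha b hb => ?_⟩
    have : a ∈ l.toFinset := List.mem_toFinset.2 ha
    rw [hlt, Finset.mem_sdiff] at this
    rintro rfl; exact this.2 (Finset.mem_toList.1 hb)
  · rw [List.toFinset_append, hlt, Finset.toList_toFinset,
      Finset.sdiff_union_of_subset hS]
  · rw [List.take_left]
    exact ⟨hlen, hstep, hsmall⟩

lemma aux (G : SimpleGraph V) [DecidableRel G.Adj] (κ : ℕ) (hκ : 0 < κ)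
    (W Z : Finset V) (hZ : Z.card = κ) :
    ∀ n (S : Finset V), S.card = n → S ⊆ Z → ∀ l : List V, l.Nodup →
    l.toFinset = Z \ S →
    (∀ i : Fin l.length,
      (uncovered G W (l.take i.1)).card ≤
        κ * (closedNbr G (l.get i) ∩ uncovered G W (l.take i.1)).card ∧
      2 * κ ^ 2 ≤ (closedNbr G (l.get i) ∩ uncovered G W (l.take i.1)).card) →
    (∀ w ∈ uncovered G W l, ∃ z ∈ S, w ∈ closedNbr G z) →
    ∃ L : List V, L.Nodup ∧ L.toFinset = Z ∧
      ∃ m ≤ κ, IsPseudoCover G κ (2 * κ ^ 2) (2 * κ ^ 3) W (L.take m) := by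
  intro n
  induction n with
  | zero =>
    intro S hcard hS l hnd hlt hstep hdomU
    by_cases hsmall : (uncovered G W l).card ≤ 2 * κ ^ 3
    · exact caseA G κ W Z S hZ hS l hnd hlt hstep hsmall
    · exfalso
      have hne : (uncovered G W l).Nonempty := by
        rw [← Finset.card_pos]; omega
      obtain ⟨w, hw⟩ := hne
      obtain ⟨z, hz, -⟩ := hdomU w hw
      rw [Finset.card_eq_zero] at hcard
      simp [hcard] at hz
  | succ n ih =>
    intro S hcard hS l hnd hlt hstep hdomU
    by_cases hsmall : (uncovered G W l).card ≤ 2 * κ ^ 3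
    · exact caseA G κ W Z S hZ hS l hnd hlt hstep hsmall
    · -- pick z in S maximizing coverage
      have hSne : S.Nonempty := Finset.card_pos.1 (by omega)
      set U := uncovered G W l with hU
      obtain ⟨z, hzS, hmax⟩ := Finset.exists_max_image S
        (fun z => (closedNbr G z ∩ U).card) hSne
      -- counting
      have hsub : U ⊆ S.biUnion (fun z => closedNbr G z ∩ U) := by
        intro w hw
        obtain ⟨z', hz', hwz'⟩ := hdomU w hw
        exact Finset.mem_biUnion.2 ⟨z', hz', Finset.mem_inter.2 ⟨hwz', hw⟩⟩
      have hcount : U.card ≤ κ * (closedNbr G z ∩ U).card := by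
        calc U.card ≤ (S.biUnion fun z => closedNbr G z ∩ U).card :=
              Finset.card_le_card hsub
          _ ≤ ∑ z' ∈ S, (closedNbr G z' ∩ U).card := Finset.card_biUnion_le
          _ ≤ ∑ _z' ∈ S, (closedNbr G z ∩ U).card :=
              Finset.sum_le_sum fun z' hz' => hmax z' hz'
          _ = S.card * (closedNbr G z ∩ U).card := by
              rw [Finset.sum_const, smul_eq_mul]
          _ ≤ κ * (closedNbr G z ∩ U).card := by
              have : S.card ≤ κ := hZ ▸ Finset.card_le_card hS
              exact Nat.mul_le_mul_right _ this
      have hcov : 2 * κ ^ 2 ≤ (closedNbr G z ∩ U).card := by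
        by_contra hcon
        push_neg at hcon
        have : κ * (closedNbr G z ∩ U).card < κ * (2 * κ ^ 2) :=
          Nat.mul_lt_mul_of_pos_left hcon hκ
        have h3 : κ * (2 * κ ^ 2) = 2 * κ ^ 3 := by ring
        omega
      -- recurse
      have hzZ : z ∈ Z := hS hzS
      have hznl : z ∉ l := by
        intro h
        have : z ∈ l.toFinset := List.mem_toFinset.2 h
        rw [hlt, Finset.mem_sdiff] at this
        exact this.2 hzS
      have hcard' : (S.erase z).card = n := by
        rw [Finset.card_erase_of_mem hzS, hcard]; rfl
      have hS' : S.erase z ⊆ Z := (Finset.erase_subset _ _).trans hS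
      have hnd' : (l ++ [z]).Nodup := by
        rw [List.nodup_append]
        exact ⟨hnd, List.nodup_singleton z, fun a ha b hb => by
          simp only [List.mem_singleton] at hb; subst hb; rintro rfl; exact hznl ha⟩
      have hlt' : (l ++ [z]).toFinset = Z \ (S.erase z) := by
        rw [List.toFinset_append, hlt]
        ext a
        simp only [Finset.mem_union, Finset.mem_sdiff, List.toFinset_cons,
          List.toFinset_nil, insert_empty_eq, Finset.mem_insert,
          Finset.notMem_empty, or_false, Finset.mem_erase, Finset.mem_singleton]
        constructor
        · rintro (⟨haZ, haS⟩ | rfl)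
          · exact ⟨haZ, fun h => haS h.2⟩
          · exact ⟨hzZ, fun h => absurd rfl h.1⟩
        · rintro ⟨haZ, h⟩
          by_cases hza : a = z
          · exact Or.inr hza
          · exact Or.inl ⟨haZ, fun haS => h ⟨hza, haS⟩⟩
      have hstep' : ∀ i : Fin (l ++ [z]).length,
          (uncovered G W ((l ++ [z]).take i.1)).card ≤
            κ * (closedNbr G ((l ++ [z]).get i) ∩
              uncovered G W ((l ++ [z]).take i.1)).card ∧
          2 * κ ^ 2 ≤ (closedNbr G ((l ++ [z]).get i) ∩
              uncovered G W ((l ++ [z]).take i.1)).card := by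
        intro i
        have hilen : i.1 < l.length + 1 := by
          have := i.2; simpa using this
        rcases Nat.lt_or_ge i.1 l.length with hi | hi
        · have htake : (l ++ [z]).take i.1 = l.take i.1 :=
            List.take_append_of_le_length (le_of_lt hi)
          have hget : (l ++ [z]).get i = l.get ⟨i.1, hi⟩ := by
            rw [List.get_eq_getElem, List.get_eq_getElem,
              List.getElem_append_left hi]
          rw [htake, hget]
          exact hstep ⟨i.1, hi⟩
        · have hieq : i.1 = l.length := by omega
          have htake : (l ++ [z]).take i.1 = l := by
            rw [hieq, List.take_left]
          have hget : (l ++ [z]).get i = z := by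
            rw [List.get_eq_getElem]
            have : i.1 - l.length < [z].length := by simp [hieq]
            rw [List.getElem_append_right (by omega)]
            simp
          rw [htake, hget]
          exact ⟨hcount, hcov⟩
      have hdomU' : ∀ w ∈ uncovered G W (l ++ [z]),
          ∃ z' ∈ S.erase z, w ∈ closedNbr G z' := by
        intro w hw
        have hw' : w ∈ uncovered G W l := by
          simp only [uncovered, Finset.mem_filter, List.mem_append] at hw ⊢
          exact ⟨hw.1, fun v hv => hw.2 v (Or.inl hv)⟩
        obtain ⟨z', hz', hwz'⟩ := hdomU w hw'
        have hwnz : w ∉ closedNbr G z := by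
          simp only [uncovered, Finset.mem_filter, List.mem_append] at hw
          exact hw.2 z (Or.inr (List.mem_singleton.2 rfl))
        refine ⟨z', Finset.mem_erase.2 ⟨fun h => ?_, hz'⟩, hwz'⟩
        subst h; exact hwnz hwz'
      exact ih (S.erase z) hcard' hS' (l ++ [z]) hnd' hlt' hstep' hdomU'

/-- If `W` has at least `ν = 2κ³` elements and `Z` is a set of `κ` vertices
dominating `W`, then the vertices of `Z` can be ordered so that some prefix of
length `m ≤ κ` is a pseudo-cover of `W` with parameters
`κ, λ = 1/κ, μ = 2κ², ν = 2κ³`. -/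
theorem stmt7 {V : Type*} [Fintype V] [DecidableEq V]
    (G : SimpleGraph V) [DecidableRel G.Adj]
    (κ : ℕ) (hκ : 0 < κ) (W Z : Finset V)
    (hW : 2 * κ ^ 3 ≤ W.card) (hZ : Z.card = κ)
    (hdom : ∀ w ∈ W, ∃ z ∈ Z, z = w ∨ G.Adj z w) :
    ∃ l : List V, l.Nodup ∧ l.toFinset = Z ∧
      ∃ m ≤ κ, IsPseudoCover G κ (2 * κ ^ 2) (2 * κ ^ 3) W (l.take m) := by
  apply aux G κ hκ W Z hZ Z.card Z rfl (le_refl Z) [] List.nodup_nil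
  · simp
  · intro i; exact absurd i.2 (by simp)
  · intro w hw
    have hwW : w ∈ W := by
      simp only [uncovered, Finset.mem_filter] at hw; exact hw.1
    obtain ⟨z, hz, hwz⟩ := hdom w hwW
    refine ⟨z, hz, ?_⟩
    simp only [closedNbr, Finset.mem_insert, SimpleGraph.mem_neighborFinset]
    rcases hwz with rfl | h
    · exact Or.inl rfl
    · exact Or.inr h
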